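/- Let m ≥ 2 and let A be a complex (m-1)×m matrix with det(A^{(k)}) ≠ 0 for k = 1, …, m-1 and det(Â^{(k)}) ≠ 0 for k = 1, …, m-1, where Â is the (m-1)×(m-1) matrix obtained from A by deleting its first column. Let K' be the (m-1)×m matrix with K' i i = 1 and K' i (i+1) = 1 for all i, and all other entries 0. Then there exist a unique complex lower triangular (m-1)×(m-1) matrix B and a unique complex upper triangular m×m matrix C whose (0,0) entry equals 1 and whose remaining first-row entries are 0, such that A = B · K' · C. -/

import Mathlib

open Matrix

/-- The `(m-1) × m` matrix `K'` with `K' i i = 1` and `K' i (i+1) = 1` for all `i`,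
and zeros elsewhere. -/
def modK' (m : ℕ) : Matrix (Fin (m - 1)) (Fin m) ℂ :=
  Matrix.of fun i j => if (j : ℕ) = (i : ℕ) ∨ (j : ℕ) = (i : ℕ) + 1 then 1 else 0

open Finset

namespace ModChol

variable {n : ℕ}

lemma sum_trunc (f : Fin n → ℂ) {t : ℕ} (h : t ≤ n)
    (h0 : ∀ k : Fin n, t ≤ (k : ℕ) → f k = 0) :
    ∑ k, f k = ∑ p : Fin t, f (Fin.castLE h p) := by
  classical
  have hmap : ∑ p : Fin t, f (Fin.castLE h p)
      = ∑ x ∈ Finset.univ.map (Fin.castLEEmb h), f x := by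
    rw [Finset.sum_map]; rfl
  rw [hmap]
  symm
  apply Finset.sum_subset (Finset.subset_univ _)
  intro x _ hx
  apply h0
  by_contra hc
  push_neg at hc
  exact hx (Finset.mem_map.mpr ⟨⟨(x : ℕ), by omega⟩, Finset.mem_univ _, by
    simp [Fin.castLEEmb, Fin.ext_iff]⟩)

/-- The leading `(i+1) × (i+1)` submatrix of `A`. -/
def Msub (A : Matrix (Fin n) (Fin (n + 1)) ℂ) (i : Fin n) :
    Matrix (Fin ((i : ℕ) + 1)) (Fin ((i : ℕ) + 1)) ℂ :=
  Matrix.of fun a b => A ⟨a, by have := a.2; have := i.2; omega⟩ ⟨b, by have := b.2; have := i.2; omega⟩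

/-- The lower-triangular matrix whose `i`-th row is `(-1)^i eₒᵀ (A^(i+1))⁻¹` (padded). -/
noncomputable def Rmat (A : Matrix (Fin n) (Fin (n + 1)) ℂ) : Matrix (Fin n) (Fin n) ℂ :=
  Matrix.of fun i j => if h : (j : ℕ) ≤ (i : ℕ) then
    (-1) ^ (i : ℕ) * (Msub A i)⁻¹ 0 ⟨j, by omega⟩ else 0

/-- Lower bidiagonal unipotent matrix. -/
def N1 (n : ℕ) : Matrix (Fin n) (Fin n) ℂ :=
  Matrix.of fun i j => if (i : ℕ) = (j : ℕ) ∨ (i : ℕ) = (j : ℕ) + 1 then 1 else 0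

noncomputable def Cmat (A : Matrix (Fin n) (Fin (n + 1)) ℂ) : Matrix (Fin (n + 1)) (Fin (n + 1)) ℂ :=
  Matrix.of fun p q => if hp : (p : ℕ) = 0 then (if (q : ℕ) = 0 then 1 else 0)
    else if (q : ℕ) = 0 then 0
    else ∑ k, Rmat A ⟨(p : ℕ) - 1, by have := p.2; omega⟩ k * A k q

lemma Rmat_zero (A : Matrix (Fin n) (Fin (n + 1)) ℂ) {i j : Fin n} (h : (i : ℕ) < (j : ℕ)) :
    Rmat A i j = 0 := by
  simp only [Rmat, of_apply]
  rw [dif_neg (by omega)]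

lemma hkey (A : Matrix (Fin n) (Fin (n + 1)) ℂ) (i : Fin n)
    (hM : IsUnit (Msub A i).det) (j : Fin (n + 1)) (hj : (j : ℕ) ≤ (i : ℕ)) :
    ∑ k, Rmat A i k * A k j = (-1) ^ (i : ℕ) * (if (j : ℕ) = 0 then 1 else 0) := by
  have hi1 : (i : ℕ) + 1 ≤ n := i.2
  rw [sum_trunc _ hi1 (fun k hk => by
    rw [Rmat_zero A (by omega), zero_mul])]
  have hstep : ∀ p : Fin ((i : ℕ) + 1),
      Rmat A i (Fin.castLE hi1 p) * A (Fin.castLE hi1 p) j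
        = (-1) ^ (i : ℕ) * ((Msub A i)⁻¹ 0 p * Msub A i p ⟨(j : ℕ), by omega⟩) := by
    intro p
    simp only [Rmat, Msub, of_apply, Fin.coe_castLE]
    rw [dif_pos (by have := p.2; omega)]
    rw [mul_assoc]
    congr 2 <;> simp [Fin.ext_iff]
  rw [Finset.sum_congr rfl fun p _ => hstep p, ← Finset.mul_sum]
  have : ∑ p : Fin ((i : ℕ) + 1), (Msub A i)⁻¹ 0 p * Msub A i p ⟨(j : ℕ), by omega⟩
      = ((Msub A i)⁻¹ * Msub A i) 0 ⟨(j : ℕ), by omega⟩ := by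
    rw [Matrix.mul_apply]
  rw [this, Matrix.nonsing_inv_mul _ hM, Matrix.one_apply]
  congr 1
  by_cases hj0 : (j : ℕ) = 0 <;> simp [Fin.ext_iff, hj0, eq_comm (a := (0 : ℕ))]


lemma Rmat_diag_ne (A : Matrix (Fin n) (Fin (n + 1)) ℂ) (i : Fin n)
    (hM : IsUnit (Msub A i).det)
    (hhat : 1 ≤ (i : ℕ) →
      (Matrix.of fun a b : Fin (i : ℕ) =>
        A ⟨a, by have := a.2; have := i.2; omega⟩
          ⟨(b : ℕ) + 1, by have := b.2; have := i.2; omega⟩).det ≠ 0) :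
    Rmat A i i ≠ 0 := by
  intro h0
  have hzero1 : ∀ k : Fin n, (i : ℕ) ≤ (k : ℕ) → Rmat A i k = 0 := by
    intro k hk
    rcases eq_or_lt_of_le hk with h | h
    · have : k = i := Fin.ext h.symm
      rw [this]; exact h0
    · exact Rmat_zero A h
  rcases Nat.eq_zero_or_pos (i : ℕ) with hi0 | hi1
  · have h1 := hkey A i hM ⟨0, by omega⟩ (Nat.zero_le _)
    rw [Finset.sum_eq_zero (fun k _ => by
      rw [hzero1 k (by omega), zero_mul])] at h1
    simp [hi0] at h1
  · -- the kernel vector argument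
    set i' := (i : ℕ) with hi'
    have hi'n : i' ≤ n := le_of_lt i.2
    set Abig : Matrix (Fin i') (Fin i') ℂ :=
      Matrix.of fun a b : Fin i' =>
        A ⟨a, by have := a.2; have := i.2; omega⟩
          ⟨(b : ℕ) + 1, by have := b.2; have := i.2; omega⟩ with hAbig
    set w : Fin i' → ℂ := fun p => Rmat A i (Fin.castLE hi'n p) with hw
    have hsum0 : ∀ j : Fin (n + 1), (j : ℕ) ≤ (i : ℕ) →
        ∑ p : Fin i', w p * A (Fin.castLE hi'n p) j
          = (-1) ^ (i : ℕ) * (if (j : ℕ) = 0 then 1 else 0) := by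
      intro j hj
      rw [← sum_trunc (fun k => Rmat A i k * A k j) hi'n
        (fun k hk => by show Rmat A i k * A k j = 0; rw [hzero1 k hk, zero_mul])]
      exact hkey A i hM j hj
    have hwne : w ≠ 0 := by
      intro hweq
      have h1 := hsum0 ⟨0, by omega⟩ (Nat.zero_le _)
      rw [Finset.sum_eq_zero (fun p _ => by
        rw [show w p = 0 from congrFun hweq p, zero_mul])] at h1
      simp at h1
      exact pow_ne_zero _ (neg_ne_zero.mpr (one_ne_zero)) h1.symm
    have hvm : w ᵥ* Abig = 0 := by
      funext b
      have h1 := hsum0 ⟨(b : ℕ) + 1, by have := b.2; omega⟩ (Nat.succ_le_of_lt b.2)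
      rw [if_neg (Nat.succ_ne_zero (b : ℕ)), mul_zero] at h1
      simp only [Matrix.vecMul, dotProduct, hAbig, of_apply, Pi.zero_apply]
      exact h1
    have := Matrix.exists_vecMul_eq_zero_iff.mp ⟨w, hwne, hvm⟩
    exact hhat hi1 this


lemma N1_mul {p : ℕ} (G : Matrix (Fin n) (Fin p) ℂ) (i : Fin n) (j : Fin p) :
    (N1 n * G) i j = G i j
      + (if h : 1 ≤ (i : ℕ) then G ⟨(i : ℕ) - 1, by have := i.2; omega⟩ j else 0) := by
  rw [Matrix.mul_apply]
  rcases Nat.eq_zero_or_pos (i : ℕ) with hi0 | hi1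
  · rw [dif_neg (by omega)]
    rw [Finset.sum_eq_single_of_mem i (Finset.mem_univ i) (fun b _ hb => by
      have hbv : (b : ℕ) ≠ (i : ℕ) := fun hc => hb (Fin.ext hc)
      simp only [N1, of_apply]
      rw [if_neg (by omega), zero_mul])]
    simp [N1]
  · rw [dif_pos (show 1 ≤ (i : ℕ) from hi1)]
    have hne : i ≠ (⟨(i : ℕ) - 1, by have := i.2; omega⟩ : Fin n) := by
      intro hc
      have := congrArg Fin.val hc
      simp at this; omega
    rw [Finset.sum_eq_add_of_mem i ⟨(i : ℕ) - 1, by have := i.2; omega⟩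
      (Finset.mem_univ _) (Finset.mem_univ _) hne (fun c _ hc => by
        have h1 : (c : ℕ) ≠ (i : ℕ) := fun h => hc.1 (Fin.ext h)
        have h2 : (c : ℕ) ≠ (i : ℕ) - 1 := fun h => hc.2 (Fin.ext h)
        simp only [N1, of_apply]
        rw [if_neg (by omega), zero_mul])]
    have e2 : ((i : ℕ) = (i : ℕ) - 1 ∨ (i : ℕ) = (i : ℕ) - 1 + 1) := Or.inr (by omega)
    simp [N1, e2]

lemma K'_mul (C : Matrix (Fin (n + 1)) (Fin (n + 1)) ℂ) (i : Fin n) (j : Fin (n + 1)) :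
    (modK' (n + 1) * C) i j
      = C ⟨(i : ℕ), by have := i.2; omega⟩ j + C ⟨(i : ℕ) + 1, by have := i.2; omega⟩ j := by
  rw [Matrix.mul_apply]
  have hne : (⟨(i : ℕ), by have := i.2; omega⟩ : Fin (n + 1))
      ≠ ⟨(i : ℕ) + 1, by have := i.2; omega⟩ := by
    intro hc; have := congrArg Fin.val hc; simp at this
  rw [Finset.sum_eq_add_of_mem _ _ (Finset.mem_univ _) (Finset.mem_univ _) hne
    (fun c _ hc => by
      have h1 : (c : ℕ) ≠ (i : ℕ) := fun h => hc.1 (Fin.ext h)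
      have h2 : (c : ℕ) ≠ (i : ℕ) + 1 := fun h => hc.2 (Fin.ext h)
      simp only [modK', of_apply]
      rw [if_neg (by omega), zero_mul])]
  simp [modK']

/-- `modK' (n+1)` re-typed with clean index types. -/
noncomputable def K'n (n : ℕ) : Matrix (Fin n) (Fin (n + 1)) ℂ := modK' (n + 1)

lemma K'n_mul (C : Matrix (Fin (n + 1)) (Fin (n + 1)) ℂ) (i : Fin n) (j : Fin (n + 1)) :
    (K'n n * C) i j
      = C ⟨(i : ℕ), by have := i.2; omega⟩ j + C ⟨(i : ℕ) + 1, by have := i.2; omega⟩ j :=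
  K'_mul C i j

lemma Cmat_succ (A : Matrix (Fin n) (Fin (n + 1)) ℂ) (i : Fin n) (j : Fin (n + 1)) :
    Cmat A ⟨(i : ℕ) + 1, by have := i.2; omega⟩ j
      = if (j : ℕ) = 0 then 0 else (Rmat A * A) i j := by
  simp only [Cmat, of_apply]
  rw [dif_neg (Nat.succ_ne_zero _)]
  by_cases hj : (j : ℕ) = 0
  · rw [if_pos hj, if_pos hj]
  · rw [if_neg hj, if_neg hj, Matrix.mul_apply]
    apply Finset.sum_congr rfl
    intro k _
    congr 2

lemma RA_col0 (A : Matrix (Fin n) (Fin (n + 1)) ℂ) (i : Fin n)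
    (hM : IsUnit (Msub A i).det) :
    (Rmat A * A) i ⟨0, Nat.succ_pos n⟩ = (-1) ^ (i : ℕ) := by
  rw [Matrix.mul_apply, hkey A i hM ⟨0, Nat.succ_pos n⟩ (Nat.zero_le _)]
  simp

lemma main_eq (A : Matrix (Fin n) (Fin (n + 1)) ℂ)
    (hM : ∀ i : Fin n, IsUnit (Msub A i).det) :
    N1 n * (Rmat A * A) = K'n n * Cmat A := by
  ext i j
  rw [N1_mul, K'n_mul, Cmat_succ]
  rcases Nat.eq_zero_or_pos (i : ℕ) with hi0 | hi1
  · rw [dif_neg (by omega)]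
    simp only [Cmat, of_apply]
    rw [dif_pos hi0, add_zero]
    by_cases hj : (j : ℕ) = 0
    · rw [if_pos hj, if_pos hj, add_zero]
      have hj' : j = ⟨0, Nat.succ_pos n⟩ := Fin.ext hj
      rw [hj', RA_col0 A i (hM i), hi0, pow_zero]
    · rw [if_neg hj, if_neg hj, zero_add]
  · rw [dif_pos (show 1 ≤ (i : ℕ) from hi1)]
    simp only [Cmat, of_apply]
    rw [dif_neg (show ¬((i : ℕ) = 0) by omega)]
    by_cases hj : (j : ℕ) = 0
    · rw [if_pos hj, if_pos hj, add_zero]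
      have hj' : j = ⟨0, Nat.succ_pos n⟩ := Fin.ext hj
      rw [hj', RA_col0 A i (hM i), RA_col0 A _ (hM _)]
      have hv : ((⟨(i : ℕ) - 1, by have := i.2; omega⟩ : Fin n) : ℕ) = (i : ℕ) - 1 := rfl
      rw [hv]
      obtain ⟨t, ht⟩ : ∃ t, (i : ℕ) = t + 1 := ⟨(i : ℕ) - 1, by omega⟩
      rw [ht]
      simp only [Nat.add_sub_cancel, pow_succ]
      ring
    · rw [if_neg hj, if_neg hj, add_comm ((Rmat A * A) i j), Matrix.mul_apply]


lemma vecMul_solve {p : ℕ} (M : Matrix (Fin p) (Fin p) ℂ) (hM : IsUnit M.det)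
    (x c : Fin p → ℂ) (h : x ᵥ* M = c) : x = c ᵥ* M⁻¹ := by
  rw [← h, Matrix.vecMul_vecMul, Matrix.mul_nonsing_inv _ hM, Matrix.vecMul_one]

/-- Any lower-triangular `W` with `W·a = v` and `(W Â)` strictly-upper-vanishing
equals `Rmat A`. -/
lemma W_eq_Rmat (A : Matrix (Fin n) (Fin (n + 1)) ℂ)
    (hM : ∀ i : Fin n, IsUnit (Msub A i).det) (W : Matrix (Fin n) (Fin n) ℂ)
    (hWlow : ∀ i j : Fin n, (i : ℕ) < (j : ℕ) → W i j = 0)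
    (hWa : ∀ i : Fin n, ∑ k, W i k * A k ⟨0, Nat.succ_pos n⟩ = (-1) ^ (i : ℕ))
    (hWA : ∀ (i : Fin n) (q : Fin (n + 1)), 1 ≤ (q : ℕ) → (q : ℕ) ≤ (i : ℕ) →
      ∑ k, W i k * A k q = 0) :
    W = Rmat A := by
  ext i j
  rcases lt_or_ge (i : ℕ) (j : ℕ) with hj | hj
  · rw [hWlow i j hj, Rmat_zero A hj]
  · set x : Fin ((i : ℕ) + 1) → ℂ := fun p => W i (Fin.castLE i.2 p) with hxdef
    have hx : x ᵥ* Msub A i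
        = fun q : Fin ((i : ℕ) + 1) => (-1) ^ (i : ℕ) * (if (q : ℕ) = 0 then 1 else 0) := by
      funext q
      have hq' : (q : ℕ) < n + 1 := by have := q.2; have := i.2; omega
      have hcalc : ∑ p : Fin ((i : ℕ) + 1), x p * Msub A i p q
          = ∑ k : Fin n, W i k * A k ⟨(q : ℕ), hq'⟩ := by
        rw [sum_trunc (fun k => W i k * A k ⟨(q : ℕ), hq'⟩) i.2
          (fun k hk => by show W i k * _ = 0; rw [hWlow i k (by omega), zero_mul])]
        exact Finset.sum_congr rfl (fun p _ => rfl)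
      show ∑ p, x p * Msub A i p q = _
      rw [hcalc]
      by_cases hq0 : (q : ℕ) = 0
      · rw [if_pos hq0, mul_one,
          show (⟨(q : ℕ), hq'⟩ : Fin (n + 1)) = ⟨0, Nat.succ_pos n⟩ from Fin.ext hq0]
        exact hWa i
      · rw [if_neg hq0, mul_zero]
        exact hWA i ⟨(q : ℕ), hq'⟩ (show 1 ≤ (q : ℕ) by omega)
          (show (q : ℕ) ≤ (i : ℕ) by have := q.2; omega)
    have hxs := vecMul_solve (Msub A i) (hM i) _ _ hx
    have hj1 : (j : ℕ) < (i : ℕ) + 1 := by omega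
    have hfin := congrFun hxs ⟨(j : ℕ), hj1⟩
    have hLHS : x ⟨(j : ℕ), hj1⟩ = W i j := rfl
    have hRHS : ((fun q : Fin ((i : ℕ) + 1) =>
        (-1) ^ (i : ℕ) * (if (q : ℕ) = 0 then 1 else 0)) ᵥ* (Msub A i)⁻¹) ⟨(j : ℕ), hj1⟩
        = (-1) ^ (i : ℕ) * (Msub A i)⁻¹ 0 ⟨(j : ℕ), hj1⟩ := by
      show ∑ q, ((-1 : ℂ)) ^ (i : ℕ) * (if ((q : Fin ((i : ℕ) + 1)) : ℕ) = 0 then 1 else 0)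
          * (Msub A i)⁻¹ q ⟨(j : ℕ), hj1⟩ = _
      rw [Finset.sum_eq_single_of_mem 0 (Finset.mem_univ _) (fun b _ hb => by
        rw [if_neg (show ¬((b : ℕ) = 0) from fun hc => hb (Fin.ext (by simpa using hc))),
          mul_zero, zero_mul])]
      simp
    rw [hLHS, hRHS] at hfin
    rw [hfin]
    simp only [Rmat, of_apply]
    rw [dif_pos hj]


lemma lower_bt (M : Matrix (Fin n) (Fin n) ℂ)
    (h : ∀ i j : Fin n, (i : ℕ) < (j : ℕ) → M i j = 0) :
    M.BlockTriangular (OrderDual.toDual : Fin n → (Fin n)ᵒᵈ) :=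
  fun i j hij => h i j hij

lemma lower_bt' (M : Matrix (Fin n) (Fin n) ℂ)
    (h : M.BlockTriangular (OrderDual.toDual : Fin n → (Fin n)ᵒᵈ)) :
    ∀ i j : Fin n, (i : ℕ) < (j : ℕ) → M i j = 0 :=
  fun i j hij => h (show OrderDual.toDual j < OrderDual.toDual i from hij)

lemma N1_det : (N1 n).det = 1 := by
  rw [Matrix.det_of_lowerTriangular _ (lower_bt _ (fun i j hij => by
    simp only [N1, of_apply]; rw [if_neg (by omega)]))]
  have : ∀ i : Fin n, N1 n i i = 1 := fun i => by
    simp [N1]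
  simp [this]

lemma Rmat_det_isUnit (A : Matrix (Fin n) (Fin (n + 1)) ℂ)
    (hd : ∀ i : Fin n, Rmat A i i ≠ 0) : IsUnit (Rmat A).det := by
  rw [isUnit_iff_ne_zero,
    Matrix.det_of_lowerTriangular _ (lower_bt _ (fun i j hij => Rmat_zero A hij))]
  exact Finset.prod_ne_zero_iff.mpr fun i _ => hd i

lemma Cmat_00 (A : Matrix (Fin n) (Fin (n + 1)) ℂ) :
    Cmat A ⟨0, Nat.succ_pos n⟩ ⟨0, Nat.succ_pos n⟩ = 1 := by
  simp [Cmat]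

lemma Cmat_row0 (A : Matrix (Fin n) (Fin (n + 1)) ℂ) (q : Fin (n + 1)) (hq : (q : ℕ) ≠ 0) :
    Cmat A ⟨0, Nat.succ_pos n⟩ q = 0 := by
  have hq' : q ≠ 0 := fun h => hq (by rw [h, Fin.val_zero])
  simp [Cmat, hq, hq']

lemma Cmat_upper (A : Matrix (Fin n) (Fin (n + 1)) ℂ)
    (hM : ∀ i : Fin n, IsUnit (Msub A i).det)
    (p q : Fin (n + 1)) (h : (q : ℕ) < (p : ℕ)) : Cmat A p q = 0 := by
  simp only [Cmat, of_apply]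
  rw [dif_neg (by omega)]
  by_cases hq : (q : ℕ) = 0
  · rw [if_pos hq]
  · rw [if_neg hq]
    have hp1 : (p : ℕ) - 1 < n := by have := p.2; omega
    have := hkey A ⟨(p : ℕ) - 1, hp1⟩ (hM _) q (by simp; omega)
    rw [this, if_neg hq, mul_zero]


/-- `A` with its first column deleted. -/
def AhatM (A : Matrix (Fin n) (Fin (n + 1)) ℂ) : Matrix (Fin n) (Fin n) ℂ :=
  Matrix.of fun a b => A a ⟨(b : ℕ) + 1, by have := b.2; omega⟩

/-- Lower-right `n × n` block of `C'`. -/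
def ChatM (C' : Matrix (Fin (n + 1)) (Fin (n + 1)) ℂ) : Matrix (Fin n) (Fin n) ℂ :=
  Matrix.of fun a b => C' ⟨(a : ℕ) + 1, by have := a.2; omega⟩ ⟨(b : ℕ) + 1, by have := b.2; omega⟩

lemma KC_hat (C' : Matrix (Fin (n + 1)) (Fin (n + 1)) ℂ)
    (hC0r : ∀ q : Fin (n + 1), (q : ℕ) ≠ 0 → C' ⟨0, Nat.succ_pos n⟩ q = 0)
    (k j : Fin n) :
    (K'n n * C') k ⟨(j : ℕ) + 1, by have := j.2; omega⟩ = (N1 n * ChatM C') k j := by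
  rw [K'n_mul, N1_mul]
  have hterm2 : C' ⟨(k : ℕ) + 1, by have := k.2; omega⟩ ⟨(j : ℕ) + 1, by have := j.2; omega⟩
      = ChatM C' k j := rfl
  rcases Nat.eq_zero_or_pos (k : ℕ) with hk0 | hk1
  · rw [dif_neg (by omega), add_zero]
    have h1 : C' ⟨(k : ℕ), by have := k.2; omega⟩ ⟨(j : ℕ) + 1, by have := j.2; omega⟩ = 0 := by
      rw [show (⟨(k : ℕ), by have := k.2; omega⟩ : Fin (n + 1)) = ⟨0, Nat.succ_pos n⟩ from
        Fin.ext hk0]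
      exact hC0r _ (Nat.succ_ne_zero _)
    rw [h1, zero_add]
    exact hterm2
  · rw [dif_pos (show 1 ≤ (k : ℕ) from hk1), add_comm (ChatM C' k j)]
    congr 1
    · show C' ⟨(k : ℕ), by have := k.2; omega⟩ _
        = C' ⟨((k : ℕ) - 1) + 1, by have := k.2; omega⟩ _
      congr 1
      exact Fin.ext (show (k : ℕ) = (k : ℕ) - 1 + 1 by omega)

lemma factor_eq (A : Matrix (Fin n) (Fin (n + 1)) ℂ)
    (B' : Matrix (Fin n) (Fin n) ℂ) (C' : Matrix (Fin (n + 1)) (Fin (n + 1)) ℂ)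
    (hC0r : ∀ q : Fin (n + 1), (q : ℕ) ≠ 0 → C' ⟨0, Nat.succ_pos n⟩ q = 0)
    (hAeq : A = B' * K'n n * C') :
    AhatM A = B' * N1 n * ChatM C' := by
  ext i j
  show A i ⟨(j : ℕ) + 1, by have := j.2; omega⟩ = _
  conv_lhs => rw [hAeq]
  rw [Matrix.mul_assoc, Matrix.mul_assoc, Matrix.mul_apply, Matrix.mul_apply]
  exact Finset.sum_congr rfl fun k _ => by rw [KC_hat C' hC0r k j]

lemma col0_eq (hn : 1 ≤ n) (A : Matrix (Fin n) (Fin (n + 1)) ℂ)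
    (B' : Matrix (Fin n) (Fin n) ℂ) (C' : Matrix (Fin (n + 1)) (Fin (n + 1)) ℂ)
    (hC'up : ∀ p q : Fin (n + 1), (q : ℕ) < (p : ℕ) → C' p q = 0)
    (hC00 : C' ⟨0, Nat.succ_pos n⟩ ⟨0, Nat.succ_pos n⟩ = 1)
    (hAeq : A = B' * K'n n * C') (i : Fin n) :
    A i ⟨0, Nat.succ_pos n⟩ = B' i ⟨0, hn⟩ := by
  conv_lhs => rw [hAeq]
  rw [Matrix.mul_assoc, Matrix.mul_apply]
  have hterm : ∀ k : Fin n, (K'n n * C') k ⟨0, Nat.succ_pos n⟩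
      = if (k : ℕ) = 0 then 1 else 0 := by
    intro k
    rw [K'n_mul]
    have h2 : C' ⟨(k : ℕ) + 1, by have := k.2; omega⟩ ⟨0, Nat.succ_pos n⟩ = 0 :=
      hC'up _ _ (show (0 : ℕ) < (k : ℕ) + 1 by omega)
    rcases Nat.eq_zero_or_pos (k : ℕ) with hk0 | hk1
    · rw [h2, add_zero,
        show (⟨(k : ℕ), by have := k.2; omega⟩ : Fin (n + 1)) = ⟨0, Nat.succ_pos n⟩ from
          Fin.ext hk0, hC00, if_pos hk0]
    · rw [h2, add_zero, hC'up _ _ (show (0 : ℕ) < (k : ℕ) from hk1), if_neg (by omega)]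
  rw [Finset.sum_congr rfl (fun k _ => by rw [hterm k])]
  rw [Finset.sum_eq_single_of_mem ⟨0, hn⟩ (Finset.mem_univ _) (fun b _ hb => by
    rw [if_neg (fun hc => hb (Fin.ext hc)), mul_zero])]
  rw [if_pos (show ((⟨0, hn⟩ : Fin n) : ℕ) = 0 from rfl), mul_one]

lemma N1_mulVec_v (hn : 1 ≤ n) :
    N1 n *ᵥ (fun k : Fin n => ((-1 : ℂ)) ^ (k : ℕ)) = Pi.single ⟨0, hn⟩ 1 := by
  funext t
  have h := N1_mul (n := n) (p := 1)
    (Matrix.of fun (k : Fin n) (_ : Fin 1) => ((-1 : ℂ)) ^ (k : ℕ)) t 0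
  rw [show (N1 n *ᵥ (fun k : Fin n => ((-1 : ℂ)) ^ (k : ℕ))) t
      = (N1 n * Matrix.of fun (k : Fin n) (_ : Fin 1) => ((-1 : ℂ)) ^ (k : ℕ)) t 0 from rfl, h]
  simp only [of_apply, Pi.single_apply]
  rcases Nat.eq_zero_or_pos (t : ℕ) with ht0 | ht1
  · rw [dif_neg (by omega), if_pos (Fin.ext ht0), ht0, pow_zero, add_zero]
  · rw [dif_pos (show 1 ≤ (t : ℕ) from ht1), if_neg (fun hc => by
      have := congrArg Fin.val hc
      simp at this; omega)]
    obtain ⟨s, hs⟩ : ∃ s, (t : ℕ) = s + 1 := ⟨(t : ℕ) - 1, by omega⟩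
    rw [hs]
    simp only [Nat.add_sub_cancel, pow_succ]
    ring

end ModChol


/-- **Modified Cholesky factorization for `(m-1) × m` matrices.** If `A` is a complex
`(m-1) × m` matrix with `det (A^(k)) ≠ 0` for `k = 1, …, m - 1` and `det (Â^(k)) ≠ 0`
for `k = 1, …, m - 1` (where `Â` deletes the first column of `A`), then there are a
unique `(m-1) × (m-1)` lower triangular `B` and a unique `m × m` upper triangular
`C`, with `C 0 0 = 1` and remaining first-row entries `0`, such that
`A = B * K' * C`. -/
theorem modified_cholesky_rectangular (m : ℕ) (hm : 2 ≤ m)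
    (A : Matrix (Fin (m - 1)) (Fin m) ℂ)
    (hdet : ∀ k : ℕ, 1 ≤ k → ∀ hk : k ≤ m - 1,
      (A.submatrix (Fin.castLE hk) (Fin.castLE (show k ≤ m by omega))).det ≠ 0)
    (hdet' : ∀ k : ℕ, 1 ≤ k → ∀ hk : k ≤ m - 1,
      (Matrix.of fun a b : Fin k =>
        A (Fin.castLE hk a) ⟨(b : ℕ) + 1, by have := b.isLt; omega⟩).det ≠ 0) :
    ∃! BC : Matrix (Fin (m - 1)) (Fin (m - 1)) ℂ × Matrix (Fin m) (Fin m) ℂ,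
      (∀ i j : Fin (m - 1), i < j → BC.1 i j = 0) ∧
      (∀ i j : Fin m, j < i → BC.2 i j = 0) ∧
      BC.2 ⟨0, by omega⟩ ⟨0, by omega⟩ = 1 ∧
      (∀ j : Fin m, j ≠ ⟨0, by omega⟩ → BC.2 ⟨0, by omega⟩ j = 0) ∧
      A = BC.1 * modK' m * BC.2 := by
  obtain ⟨n, rfl⟩ : ∃ n, m = n + 1 := ⟨m - 1, by omega⟩
  have hn : 1 ≤ n := by omega
  -- reinterpret `A` with clean index types
  have A' : Matrix (Fin n) (Fin (n + 1)) ℂ := A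
  have hM : ∀ i : Fin n, IsUnit (ModChol.Msub (A : Matrix (Fin n) (Fin (n + 1)) ℂ) i).det := by
    intro i
    rw [isUnit_iff_ne_zero]
    exact hdet ((i : ℕ) + 1) (by omega) (by have := i.2; omega)
  set AA : Matrix (Fin n) (Fin (n + 1)) ℂ := A with hAA
  have hRd : ∀ i : Fin n, ModChol.Rmat AA i i ≠ 0 := fun i =>
    ModChol.Rmat_diag_ne AA i (hM i) (fun h1 => hdet' (i : ℕ) h1 (le_of_lt i.2))
  have hRunit : IsUnit (ModChol.Rmat AA).det := ModChol.Rmat_det_isUnit AA hRd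
  have hN1unit : IsUnit (ModChol.N1 n).det := by rw [ModChol.N1_det]; exact isUnit_one
  haveI := (ModChol.Rmat AA).invertibleOfIsUnitDet hRunit
  haveI := (ModChol.N1 n).invertibleOfIsUnitDet hN1unit
  have hRlow := ModChol.lower_bt _ (fun i j h => ModChol.Rmat_zero AA (i := i) (j := j) h)
  have hN1low := ModChol.lower_bt (ModChol.N1 n) (fun i j h => by
    simp only [ModChol.N1, Matrix.of_apply]; rw [if_neg (by omega)])
  have hBlow := (Matrix.blockTriangular_inv_of_blockTriangular hRlow).mul
    (Matrix.blockTriangular_inv_of_blockTriangular hN1low)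
  refine ⟨⟨(ModChol.Rmat AA)⁻¹ * (ModChol.N1 n)⁻¹, ModChol.Cmat AA⟩,
    ⟨?_, ?_, ?_, ?_, ?_⟩, ?_⟩
  · intro i j hij
    exact ModChol.lower_bt' _ hBlow i j hij
  · intro i j hij
    exact ModChol.Cmat_upper AA hM i j hij
  · exact ModChol.Cmat_00 AA
  · intro j hj
    exact ModChol.Cmat_row0 AA j (fun hc => hj (Fin.ext hc))
  · -- A = B * K' * C
    have hmain := ModChol.main_eq AA hM
    have h1 : (ModChol.N1 n)⁻¹ * (ModChol.K'n n * ModChol.Cmat AA) = ModChol.Rmat AA * AA := by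
      rw [← hmain, Matrix.nonsing_inv_mul_cancel_left _ _ hN1unit]
    show AA = (ModChol.Rmat AA)⁻¹ * (ModChol.N1 n)⁻¹ * ModChol.K'n n * ModChol.Cmat AA
    calc AA = (ModChol.Rmat AA)⁻¹ * (ModChol.Rmat AA * AA) :=
          (Matrix.nonsing_inv_mul_cancel_left _ _ hRunit).symm
      _ = (ModChol.Rmat AA)⁻¹ * ((ModChol.N1 n)⁻¹ * (ModChol.K'n n * ModChol.Cmat AA)) := by
          rw [h1]
      _ = (ModChol.Rmat AA)⁻¹ * (ModChol.N1 n)⁻¹ * ModChol.K'n n * ModChol.Cmat AA := by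
          rw [Matrix.mul_assoc, Matrix.mul_assoc]
  · -- uniqueness
    rintro ⟨B', C'⟩ ⟨hB', hC', hC00, hC0r, hAeq⟩
    set B2 : Matrix (Fin n) (Fin n) ℂ := B' with hB2def
    have hB2n : ∀ i j : Fin n, (i : ℕ) < (j : ℕ) → B2 i j = 0 := fun i j h => hB' i j h
    have hC'up : ∀ p q : Fin (n + 1), (q : ℕ) < (p : ℕ) → C' p q = 0 := fun p q h => hC' p q h
    have hC00' : C' ⟨0, Nat.succ_pos n⟩ ⟨0, Nat.succ_pos n⟩ = 1 := hC00
    have hC0r' : ∀ q : Fin (n + 1), (q : ℕ) ≠ 0 → C' ⟨0, Nat.succ_pos n⟩ q = 0 :=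
      fun q hq => hC0r q (fun hc => hq (congrArg Fin.val hc))
    have hAeq' : AA = B2 * ModChol.K'n n * C' := hAeq
    have hBN := ModChol.factor_eq AA B2 C' hC0r' hAeq'
    have hAhatdet : (ModChol.AhatM AA).det ≠ 0 := hdet' n hn (by omega)
    have h5 : (ModChol.AhatM AA).det = (B2 * ModChol.N1 n).det * (ModChol.ChatM C').det := by
      rw [hBN, Matrix.det_mul]
    have hT'unit : IsUnit (B2 * ModChol.N1 n).det := by
      rw [isUnit_iff_ne_zero]
      intro hc
      exact hAhatdet (by rw [h5, hc, zero_mul])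
    haveI := (B2 * ModChol.N1 n).invertibleOfIsUnitDet hT'unit
    have hWlowBT := Matrix.blockTriangular_inv_of_blockTriangular
      ((ModChol.lower_bt B2 hB2n).mul hN1low)
    have hWlow := ModChol.lower_bt' _ hWlowBT
    have hWChat : (B2 * ModChol.N1 n)⁻¹ * ModChol.AhatM AA = ModChol.ChatM C' := by
      rw [hBN, Matrix.nonsing_inv_mul_cancel_left _ _ hT'unit]
    -- the mulVec facts
    have hT'v : (B2 * ModChol.N1 n) *ᵥ (fun k : Fin n => ((-1 : ℂ)) ^ (k : ℕ))
        = fun i => AA i ⟨0, Nat.succ_pos n⟩ := by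
      rw [← Matrix.mulVec_mulVec, ModChol.N1_mulVec_v hn, Matrix.mulVec_single]
      funext i
      simp only [MulOpposite.op_one, one_smul]
      exact (ModChol.col0_eq hn AA B2 C' hC'up hC00' hAeq' i).symm
    have hWv : (B2 * ModChol.N1 n)⁻¹ *ᵥ (fun k : Fin n => AA k ⟨0, Nat.succ_pos n⟩)
        = fun k : Fin n => ((-1 : ℂ)) ^ (k : ℕ) := by
      rw [← hT'v, Matrix.mulVec_mulVec, Matrix.nonsing_inv_mul _ hT'unit, Matrix.one_mulVec]
    have hWa : ∀ i : Fin n, ∑ k, (B2 * ModChol.N1 n)⁻¹ i k * AA k ⟨0, Nat.succ_pos n⟩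
        = (-1) ^ (i : ℕ) := fun i => congrFun hWv i
    have hWA : ∀ (i : Fin n) (q : Fin (n + 1)), 1 ≤ (q : ℕ) → (q : ℕ) ≤ (i : ℕ) →
        ∑ k, (B2 * ModChol.N1 n)⁻¹ i k * AA k q = 0 := by
      intro i q h1 hq
      have hq1 : (q : ℕ) - 1 < n := by have := i.2; omega
      have h6 := congrFun (congrFun hWChat i) ⟨(q : ℕ) - 1, hq1⟩
      have hlhs : ((B2 * ModChol.N1 n)⁻¹ * ModChol.AhatM AA) i ⟨(q : ℕ) - 1, hq1⟩
          = ∑ k, (B2 * ModChol.N1 n)⁻¹ i k * AA k q := by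
        rw [Matrix.mul_apply]
        refine Finset.sum_congr rfl fun k _ => ?_
        congr 1
        show AA k ⟨((q : ℕ) - 1) + 1, by omega⟩ = AA k q
        congr 1
        exact Fin.ext (show ((q : ℕ) - 1) + 1 = (q : ℕ) by omega)
      have hrhs : ModChol.ChatM C' i ⟨(q : ℕ) - 1, hq1⟩ = 0 :=
        hC'up _ _ (show ((q : ℕ) - 1) + 1 < (i : ℕ) + 1 by omega)
      rw [hlhs, hrhs] at h6
      exact h6
    have hWR : (B2 * ModChol.N1 n)⁻¹ = ModChol.Rmat AA :=
      ModChol.W_eq_Rmat AA hM _ hWlow hWa hWA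
    have hT'R : B2 * ModChol.N1 n = (ModChol.Rmat AA)⁻¹ := by
      rw [← Matrix.nonsing_inv_nonsing_inv (B2 * ModChol.N1 n) hT'unit, hWR]
    have hB'eq : B2 = (ModChol.Rmat AA)⁻¹ * (ModChol.N1 n)⁻¹ := by
      rw [← hT'R, Matrix.mul_nonsing_inv_cancel_right _ _ hN1unit]
    have hChatR : ModChol.ChatM C' = ModChol.Rmat AA * ModChol.AhatM AA := by
      rw [← hWChat, hWR]
    have hC'eq : C' = ModChol.Cmat AA := by
      ext p q
      rcases Nat.eq_zero_or_pos (p : ℕ) with hp0 | hp1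
      · have hp : p = ⟨0, Nat.succ_pos n⟩ := Fin.ext hp0
        rw [hp]
        rcases Nat.eq_zero_or_pos (q : ℕ) with hq0 | hq1
        · have hq : q = ⟨0, Nat.succ_pos n⟩ := Fin.ext hq0
          rw [hq, hC00', ModChol.Cmat_00 AA]
        · rw [hC0r' q (by omega), ModChol.Cmat_row0 AA q (by omega)]
      · rcases Nat.eq_zero_or_pos (q : ℕ) with hq0 | hq1
        · rw [hC'up p q (by omega), ModChol.Cmat_upper AA hM p q (by omega)]
        · have hpm : (p : ℕ) - 1 < n := by have := p.2; omega
          have hqm : (q : ℕ) - 1 < n := by have := q.2; omega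
          have h6 := congrFun (congrFun hChatR ⟨(p : ℕ) - 1, hpm⟩) ⟨(q : ℕ) - 1, hqm⟩
          have hL : ModChol.ChatM C' ⟨(p : ℕ) - 1, hpm⟩ ⟨(q : ℕ) - 1, hqm⟩ = C' p q := by
            show C' ⟨((p : ℕ) - 1) + 1, by omega⟩ ⟨((q : ℕ) - 1) + 1, by omega⟩ = C' p q
            have e1 : (⟨((p : ℕ) - 1) + 1, by omega⟩ : Fin (n + 1)) = p :=
              Fin.ext (show ((p : ℕ) - 1) + 1 = (p : ℕ) by omega)
            have e2 : (⟨((q : ℕ) - 1) + 1, by omega⟩ : Fin (n + 1)) = q :=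
              Fin.ext (show ((q : ℕ) - 1) + 1 = (q : ℕ) by omega)
            rw [e1, e2]
          have hR2 : (ModChol.Rmat AA * ModChol.AhatM AA) ⟨(p : ℕ) - 1, hpm⟩
              ⟨(q : ℕ) - 1, hqm⟩ = ModChol.Cmat AA p q := by
            simp only [ModChol.Cmat, Matrix.of_apply]
            rw [dif_neg (by omega), if_neg (by omega), Matrix.mul_apply]
            refine Finset.sum_congr rfl fun k _ => ?_
            congr 1
            show AA k ⟨((q : ℕ) - 1) + 1, by omega⟩ = AA k q
            congr 1
            exact Fin.ext (show ((q : ℕ) - 1) + 1 = (q : ℕ) by omega)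
          rw [hL] at h6
          rw [h6, hR2]
    exact Prod.ext hB'eq hC'eq
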